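/- Fix k, θ > 0 and x > 0. With r(δ) = kθ/(θ−δ) and q(δ) = (θ−δ)/θ, the rescaled negative binomial pmf converges pointwise to the Gamma density: lim_{δ→0⁺} (1/δ) · b(⌊x/δ⌋, r(δ), q(δ)) = x^{k−1} e^{−x/θ} / (Γ(k) θ^k). -/

import Mathlib

open Real Filter Topology

private lemma gammaRatio_bounds {y r : ℝ} (hy : 1 ≤ y) (hr : 0 < r) :
    Real.Gamma (y + 1) * min (y ^ (r - 1)) ((y + r) ^ (r - 1)) ≤ Real.Gamma (y + r) ∧
    Real.Gamma (y + r) ≤ Real.Gamma (y + 1) * max (y ^ (r - 1)) ((y + r) ^ (r - 1)) := by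
  have hy0 : (0:ℝ) < y := lt_of_lt_of_le one_pos hy
  have hyr0 : (0:ℝ) < y + r := by linarith
  set f : ℝ → ℝ := Real.log ∘ Real.Gamma with hf
  have hΓy : 0 < Real.Gamma y := Real.Gamma_pos_of_pos hy0
  have hΓ1 : 0 < Real.Gamma (y + 1) := Real.Gamma_pos_of_pos (by linarith)
  have hΓr : 0 < Real.Gamma (y + r) := Real.Gamma_pos_of_pos hyr0
  have hΓr1 : 0 < Real.Gamma (y + r + 1) := Real.Gamma_pos_of_pos (by linarith)
  have hfy : f (y + 1) = Real.log y + f y := by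
    simp only [hf, Function.comp_apply, Real.Gamma_add_one hy0.ne']
    rw [Real.log_mul hy0.ne' hΓy.ne']
  have hfyr : f (y + r + 1) = Real.log (y + r) + f (y + r) := by
    simp only [hf, Function.comp_apply, Real.Gamma_add_one hyr0.ne']
    rw [Real.log_mul hyr0.ne' hΓr.ne']
  have hcv := Real.convexOn_log_Gamma
  have hmem : ∀ {t : ℝ}, 0 < t → t ∈ Set.Ioi (0:ℝ) := fun h => h
  -- log-scale bounds
  have key : Real.log (Real.Gamma (y+1)) + min ((r-1) * Real.log y) ((r-1) * Real.log (y+r))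
        ≤ Real.log (Real.Gamma (y+r)) ∧
      Real.log (Real.Gamma (y+r)) ≤
        Real.log (Real.Gamma (y+1)) + max ((r-1) * Real.log y) ((r-1) * Real.log (y+r)) := by
    have hlog : Real.log y ≤ Real.log (y + r) := Real.log_le_log hy0 (by linarith)
    rcases lt_trichotomy r 1 with h1 | h1 | h1
    · have a1 := hcv.secant_mono_aux1 (hmem hy0) (hmem (by linarith : (0:ℝ) < y + 1))
        (by linarith : y < y + r) (by linarith : y + r < y + 1)
      have a2 := hcv.secant_mono_aux1 (hmem hyr0) (hmem (by linarith : (0:ℝ) < y + r + 1))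
        (by linarith : y + r < y + 1) (by linarith : y + 1 < y + r + 1)
      simp only [hf, Function.comp_apply] at a1 a2 hfy hfyr ⊢
      constructor
      · have : (r-1) * Real.log (y+r) ≤ (r-1) * Real.log y :=
          mul_le_mul_of_nonpos_left hlog (by linarith)
        rw [min_eq_right this]
        nlinarith [a2, hfyr]
      · have : (r-1) * Real.log (y+r) ≤ (r-1) * Real.log y :=
          mul_le_mul_of_nonpos_left hlog (by linarith)
        rw [max_eq_left this]
        nlinarith [a1, hfy]
    · subst h1
      simp [hf]
    · have a1 := hcv.secant_mono_aux1 (hmem hy0) (hmem hyr0)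
        (by linarith : y < y + 1) (by linarith : y + 1 < y + r)
      have a2 := hcv.secant_mono_aux1 (hmem (by linarith : (0:ℝ) < y + 1))
        (hmem (by linarith : (0:ℝ) < y + r + 1))
        (by linarith : y + 1 < y + r) (by linarith : y + r < y + r + 1)
      simp only [hf, Function.comp_apply] at a1 a2 hfy hfyr ⊢
      constructor
      · have : (r-1) * Real.log y ≤ (r-1) * Real.log (y+r) :=
          mul_le_mul_of_nonneg_left hlog (by linarith)
        rw [min_eq_left this]
        nlinarith [a1, hfy]
      · have : (r-1) * Real.log y ≤ (r-1) * Real.log (y+r) :=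
          mul_le_mul_of_nonneg_left hlog (by linarith)
        rw [max_eq_right this]
        nlinarith [a2, hfyr]
  -- transfer to multiplicative scale
  have e1 : Real.Gamma (y+1) * y ^ (r-1) =
      Real.exp (Real.log (Real.Gamma (y+1)) + (r-1) * Real.log y) := by
    rw [Real.exp_add, Real.exp_log hΓ1, Real.rpow_def_of_pos hy0, mul_comm (Real.log y)]
  have e2 : Real.Gamma (y+1) * (y+r) ^ (r-1) =
      Real.exp (Real.log (Real.Gamma (y+1)) + (r-1) * Real.log (y+r)) := by
    rw [Real.exp_add, Real.exp_log hΓ1, Real.rpow_def_of_pos hyr0, mul_comm (Real.log (y+r))]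
  have e3 : Real.Gamma (y+r) = Real.exp (Real.log (Real.Gamma (y+r))) := (Real.exp_log hΓr).symm
  have ey : y ^ (r-1) = Real.exp ((r-1) * Real.log y) := by
    rw [Real.rpow_def_of_pos hy0, mul_comm]
  have eyr : (y+r) ^ (r-1) = Real.exp ((r-1) * Real.log (y+r)) := by
    rw [Real.rpow_def_of_pos hyr0, mul_comm]
  obtain ⟨k1, k2⟩ := key
  rcases le_total ((r-1) * Real.log y) ((r-1) * Real.log (y+r)) with h | h
  · rw [min_eq_left h] at k1; rw [max_eq_right h] at k2
    have hm : min (y^(r-1)) ((y+r)^(r-1)) = y^(r-1) := by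
      rw [ey, eyr]; exact min_eq_left (Real.exp_le_exp.mpr h)
    have hM : max (y^(r-1)) ((y+r)^(r-1)) = (y+r)^(r-1) := by
      rw [ey, eyr]; exact max_eq_right (Real.exp_le_exp.mpr h)
    rw [hm, hM, e1, e2, e3]
    exact ⟨Real.exp_le_exp.mpr k1, Real.exp_le_exp.mpr k2⟩
  · rw [min_eq_right h] at k1; rw [max_eq_left h] at k2
    have hm : min (y^(r-1)) ((y+r)^(r-1)) = (y+r)^(r-1) := by
      rw [ey, eyr]; exact min_eq_right (Real.exp_le_exp.mpr h)
    have hM : max (y^(r-1)) ((y+r)^(r-1)) = y^(r-1) := by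
      rw [ey, eyr]; exact max_eq_left (Real.exp_le_exp.mpr h)
    rw [hm, hM, e1, e2, e3]
    exact ⟨Real.exp_le_exp.mpr k1, Real.exp_le_exp.mpr k2⟩

/-- The negative binomial pmf `b(n, r, q) = Γ(n+r)/(n! Γ(r)) (1−q)^r q^n`. -/
noncomputable def negBinPMF (r q : ℝ) (n : ℕ) : ℝ :=
  Real.Gamma (n + r) / (n.factorial * Real.Gamma r) * (1 - q) ^ r * q ^ n

/-- With `r(δ) = kθ/(θ−δ)` and `q(δ) = (θ−δ)/θ`, the rescaled negative binomial pmf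
converges pointwise, as `δ → 0⁺`, to the Gamma(k,θ) density:
`lim_{δ→0⁺} (1/δ) b(⌊x/δ⌋, r(δ), q(δ)) = x^{k−1} e^{−x/θ}/(Γ(k) θ^k)`. -/
theorem negBin_tendsto_gamma_density (k θ x : ℝ) (hk : 0 < k) (hθ : 0 < θ) (hx : 0 < x) :
    Tendsto (fun δ : ℝ =>
        (1 / δ) * negBinPMF (k * θ / (θ - δ)) ((θ - δ) / θ) ⌊x / δ⌋₊)
      (𝓝[>] 0)
      (𝓝 (x ^ (k - 1) * Real.exp (-x / θ) / (Real.Gamma k * θ ^ k))) := by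
  set l : Filter ℝ := 𝓝[>] (0:ℝ) with hl
  set R : ℝ → ℝ := fun δ => k * θ / (θ - δ) with hRdef
  set N : ℝ → ℝ := fun δ => (⌊x / δ⌋₊ : ℝ) with hNdef
  -- basic eventual facts
  have hev : ∀ᶠ δ in l, 0 < δ ∧ δ < θ ∧ δ < x := by
    filter_upwards [self_mem_nhdsWithin,
      Ioo_mem_nhdsGT_of_mem (Set.left_mem_Ico.mpr (lt_min hθ hx))] with δ h1 h2
    exact ⟨h1, lt_of_lt_of_le h2.2 (min_le_left _ _), lt_of_lt_of_le h2.2 (min_le_right _ _)⟩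
  have hδ0 : Tendsto (fun δ : ℝ => δ) l (𝓝 0) := tendsto_id.mono_left nhdsWithin_le_nhds
  -- R tends to k
  have hR : Tendsto R l (𝓝 k) := by
    have : Tendsto R (𝓝 0) (𝓝 (k * θ / (θ - 0))) := by
      apply Tendsto.div tendsto_const_nhds (tendsto_const_nhds.sub tendsto_id)
      simpa using hθ.ne'
    simp only [sub_zero, mul_div_assoc, div_self hθ.ne', mul_one] at this
    exact this.mono_left nhdsWithin_le_nhds
  have hRpos : ∀ᶠ δ in l, 0 < R δ := by
    filter_upwards [hev] with δ ⟨h0, h1, _⟩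
    exact div_pos (mul_pos hk hθ) (by linarith)
  -- N δ * δ tends to x
  have hNd : Tendsto (fun δ => N δ * δ) l (𝓝 x) := by
    have hg : Tendsto (fun δ : ℝ => x - δ) l (𝓝 x) := by
      simpa using ((tendsto_const_nhds : Tendsto (fun _ : ℝ => x) l (𝓝 x)).sub hδ0)
    apply tendsto_of_tendsto_of_tendsto_of_le_of_le' hg
      (tendsto_const_nhds : Tendsto (fun _ : ℝ => x) l (𝓝 x))
    · filter_upwards [hev] with δ ⟨h0, _, _⟩
      have := Nat.lt_floor_add_one (x / δ)
      have h2 : x / δ < N δ + 1 := by simp only [hNdef]; exact_mod_cast this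
      have := (div_lt_iff₀ h0).mp h2
      nlinarith
    · filter_upwards [hev] with δ ⟨h0, _, _⟩
      have h2 : N δ ≤ x / δ := Nat.floor_le (by positivity)
      calc N δ * δ ≤ x / δ * δ := by nlinarith
        _ = x := by field_simp
  have hN1 : ∀ᶠ δ in l, 1 ≤ N δ := by
    filter_upwards [hev] with δ ⟨h0, _, h2⟩
    have h3 : (1:ℕ) ≤ ⌊x / δ⌋₊ := Nat.le_floor (by rw [Nat.cast_one, le_div_iff₀ h0]; simpa using h2.le)
    simp only [hNdef]
    exact_mod_cast h3
  -- T1 : the gamma-ratio factor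
  have hNRd : Tendsto (fun δ => (N δ + R δ) * δ) l (𝓝 x) := by
    have h' : Tendsto (fun δ => N δ * δ + R δ * δ) l (𝓝 (x + k * 0)) := hNd.add (hR.mul hδ0)
    rw [mul_zero, add_zero] at h'
    exact h'.congr fun δ => by ring
  have hRm1 : Tendsto (fun δ => R δ - 1) l (𝓝 (k - 1)) := hR.sub tendsto_const_nhds
  have hlow : Tendsto (fun δ => min ((N δ * δ) ^ (R δ - 1)) (((N δ + R δ) * δ) ^ (R δ - 1)))
      l (𝓝 (x ^ (k-1))) := by
    have t1 := hNd.rpow hRm1 (Or.inl hx.ne')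
    have t2 := hNRd.rpow hRm1 (Or.inl hx.ne')
    simpa using t1.min t2
  have hhigh : Tendsto (fun δ => max ((N δ * δ) ^ (R δ - 1)) (((N δ + R δ) * δ) ^ (R δ - 1)))
      l (𝓝 (x ^ (k-1))) := by
    have t1 := hNd.rpow hRm1 (Or.inl hx.ne')
    have t2 := hNRd.rpow hRm1 (Or.inl hx.ne')
    simpa using t1.max t2
  have H1 : Tendsto (fun δ => δ ^ (R δ - 1) * (Real.Gamma (N δ + R δ) / Real.Gamma (N δ + 1)))
      l (𝓝 (x ^ (k-1))) := by
    apply tendsto_of_tendsto_of_tendsto_of_le_of_le' hlow hhigh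
    · filter_upwards [hev, hRpos, hN1] with δ ⟨h0, _, _⟩ hr hn1
      obtain ⟨hb1, _⟩ := gammaRatio_bounds hn1 hr
      have hΓ1 : 0 < Real.Gamma (N δ + 1) := Real.Gamma_pos_of_pos (by linarith)
      have hδp : (0:ℝ) < δ ^ (R δ - 1) := Real.rpow_pos_of_pos h0 _
      have hNp : (0:ℝ) < N δ := by linarith
      have e1 : (N δ * δ) ^ (R δ - 1) = N δ ^ (R δ - 1) * δ ^ (R δ - 1) :=
        Real.mul_rpow hNp.le h0.le
      have e2 : ((N δ + R δ) * δ) ^ (R δ - 1) = (N δ + R δ) ^ (R δ - 1) * δ ^ (R δ - 1) :=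
        Real.mul_rpow (by linarith) h0.le
      rw [e1, e2, ← min_mul_of_nonneg _ _ hδp.le, mul_comm (δ ^ (R δ - 1))]
      apply mul_le_mul_of_nonneg_right _ hδp.le
      rw [le_div_iff₀ hΓ1, mul_comm]
      exact hb1
    · filter_upwards [hev, hRpos, hN1] with δ ⟨h0, _, _⟩ hr hn1
      obtain ⟨_, hb2⟩ := gammaRatio_bounds hn1 hr
      have hΓ1 : 0 < Real.Gamma (N δ + 1) := Real.Gamma_pos_of_pos (by linarith)
      have hδp : (0:ℝ) < δ ^ (R δ - 1) := Real.rpow_pos_of_pos h0 _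
      have hNp : (0:ℝ) < N δ := by linarith
      have e1 : (N δ * δ) ^ (R δ - 1) = N δ ^ (R δ - 1) * δ ^ (R δ - 1) :=
        Real.mul_rpow hNp.le h0.le
      have e2 : ((N δ + R δ) * δ) ^ (R δ - 1) = (N δ + R δ) ^ (R δ - 1) * δ ^ (R δ - 1) :=
        Real.mul_rpow (by linarith) h0.le
      rw [e1, e2, ← max_mul_of_nonneg _ _ hδp.le, mul_comm (δ ^ (R δ - 1))]
      apply mul_le_mul_of_nonneg_right _ hδp.le
      rw [div_le_iff₀ hΓ1, mul_comm]
      exact hb2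
  -- T3 : q ^ n factor
  have H3 : Tendsto (fun δ => ((θ - δ) / θ) ^ (⌊x / δ⌋₊)) l (𝓝 (Real.exp (-x / θ))) := by
    have hder : HasDerivAt (fun t : ℝ => Real.log ((θ - t) / θ)) (-1/θ) 0 := by
      have h1 : HasDerivAt (fun t : ℝ => (θ - t) / θ) (-1/θ) 0 :=
        (((hasDerivAt_id (0:ℝ)).const_sub θ).div_const θ)
      have h2 := h1.log (by simp [hθ.ne'])
      convert h2 using 1
      field_simp
      simp [hθ.ne']
    have hslope := hasDerivAt_iff_tendsto_slope.mp hder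
    have hslope' : Tendsto (fun δ => Real.log ((θ - δ) / θ) / δ) l (𝓝 (-1/θ)) := by
      have hmono : l ≤ 𝓝[≠] (0:ℝ) :=
        nhdsWithin_mono 0 (fun y hy => ne_of_gt hy)
      refine (hslope.mono_left hmono).congr' ?_
      filter_upwards [self_mem_nhdsWithin] with δ h0
      simp [slope_def_field, hθ.ne', sub_zero]
    have hprod : Tendsto (fun δ => N δ * δ * (Real.log ((θ - δ) / θ) / δ)) l
        (𝓝 (x * (-1/θ))) := hNd.mul hslope'
    have := (Real.continuous_exp.tendsto _).comp hprod
    have hval : x * (-1/θ) = -x/θ := by ring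
    rw [hval] at this
    apply this.congr'
    filter_upwards [hev] with δ ⟨h0, h1, _⟩
    have hq : 0 < (θ - δ)/θ := div_pos (by linarith) hθ
    simp only [Function.comp_apply]
    have e : N δ * δ * (Real.log ((θ - δ)/θ)/δ) = (⌊x/δ⌋₊ : ℝ) * Real.log ((θ - δ)/θ) := by
      rw [hNdef]
      field_simp
    rw [e, ← Real.log_pow, Real.exp_log (pow_pos hq _)]
  -- T2 : the constant factor
  have hGk : (0:ℝ) < Real.Gamma k := Real.Gamma_pos_of_pos hk
  have hGR : Tendsto (fun d => Real.Gamma (R d)) l (𝓝 (Real.Gamma k)) := by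
    have hc : ContinuousAt Real.Gamma k := by
      apply (Real.differentiableAt_Gamma ?_).continuousAt
      intro m
      exact ne_of_gt (lt_of_le_of_lt (neg_nonpos.mpr (Nat.cast_nonneg m)) hk)
    exact hc.tendsto.comp hR
  have hθR : Tendsto (fun d => (θ:ℝ) ^ (R d)) l (𝓝 (θ ^ k)) :=
    (tendsto_const_nhds : Tendsto (fun _ : ℝ => θ) l (𝓝 θ)).rpow hR (Or.inl hθ.ne')
  have H2 : Tendsto (fun d => (Real.Gamma (R d) * θ ^ (R d))⁻¹) l
      (𝓝 ((Real.Gamma k * θ ^ k)⁻¹)) := by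
    apply (hGR.mul hθR).inv₀
    have : (0:ℝ) < θ ^ k := Real.rpow_pos_of_pos hθ _
    positivity
  -- assemble
  have Hfull : Tendsto (fun δ =>
      (δ ^ (R δ - 1) * (Real.Gamma (N δ + R δ) / Real.Gamma (N δ + 1)))
        * ((θ - δ) / θ) ^ (⌊x / δ⌋₊) * (Real.Gamma (R δ) * θ ^ (R δ))⁻¹) l
      (𝓝 (x ^ (k - 1) * Real.exp (-x / θ) * (Real.Gamma k * θ ^ k)⁻¹)) :=
    (H1.mul H3).mul H2
  rw [div_eq_mul_inv]
  apply Hfull.congr'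
  filter_upwards [hev, hRpos] with δ ⟨h0, h1, h2⟩ hr
  have hq : (1:ℝ) - (θ - δ) / θ = δ / θ := by field_simp; ring
  have hG1 : 0 < Real.Gamma (N δ + 1) := by
    apply Real.Gamma_pos_of_pos
    have : (0:ℝ) ≤ N δ := by rw [hNdef]; positivity
    linarith
  have hfact : ((⌊x / δ⌋₊).factorial : ℝ) = Real.Gamma (N δ + 1) := by
    rw [hNdef, Real.Gamma_nat_eq_factorial]
  have hGr : 0 < Real.Gamma (R δ) := Real.Gamma_pos_of_pos hr
  have hθr : (0:ℝ) < θ ^ (R δ) := Real.rpow_pos_of_pos hθ _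
  have hδr : (0:ℝ) < δ ^ (R δ) := Real.rpow_pos_of_pos h0 _
  rw [negBinPMF, hq, Real.div_rpow h0.le hθ.le, hfact, Real.rpow_sub h0, Real.rpow_one]
  simp only [hRdef, hNdef] at hGr hθr hδr hG1 ⊢
  field_simp
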